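/- Let N ≥ 2, let h₁, h₂ ∈ ℂᴺ be vectors such that the orthogonal projection of h₂* onto the line spanned by h₁* is nonzero and the projection of h₂* onto the orthogonal complement of that line is also nonzero, and let A₀, B₀, C₀, D₀ > 0. Define the objective F(w) = A₀|h₁ᵀw|² + B₀|h₁ᵀw|²|h₂ᵀw|² / (C₀|h₁ᵀw|² + D₀|h₂ᵀw|² + 1) for w ∈ ℂᴺ. Then there exists a real number x̄ ∈ [0,1] such that the unit vector w_opt = x̄ · Π_{h₁*}h₂*/‖Π_{h₁*}h₂*‖ + √(1−x̄²) · Π⊥_{h₁*}h₂*/‖Π⊥_{h₁*}h₂*‖ attains the supremum of F over the unit sphere {w ∈ ℂᴺ : ‖w‖ = 1}. -/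

import Mathlib

open scoped RealInnerProductSpace
open scoped InnerProductSpace

private lemma phi_mono' {B C D s t t' : ℝ} (A : ℝ) (hB : 0 ≤ B) (hC : 0 ≤ C) (hD : 0 ≤ D)
    (hs : 0 ≤ s) (ht : 0 ≤ t) (h : t ≤ t') :
    A * s + B * s * t / (C * s + D * t + 1) ≤ A * s + B * s * t' / (C * s + D * t' + 1) := by
  have ht' : 0 ≤ t' := ht.trans h
  have h1 : 0 < C * s + D * t + 1 := by nlinarith [mul_nonneg hC hs, mul_nonneg hD ht]
  have h2 : 0 < C * s + D * t' + 1 := by nlinarith [mul_nonneg hC hs, mul_nonneg hD ht']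
  have key : B * s * t / (C * s + D * t + 1) ≤ B * s * t' / (C * s + D * t' + 1) := by
    rw [div_le_div_iff₀ h1 h2]
    nlinarith [mul_nonneg (mul_nonneg (mul_nonneg hB hs)
      (by nlinarith [mul_nonneg hC hs] : (0:ℝ) ≤ C * s + 1)) (sub_nonneg.2 h)]
  linarith

set_option maxHeartbeats 1000000 in
theorem optimal_beamformer_structure (N : ℕ) (hN : 2 ≤ N)
    (h₁ h₂ : EuclideanSpace ℂ (Fin N))
    (A₀ B₀ C₀ D₀ : ℝ) (hA : 0 < A₀) (hB : 0 < B₀) (hC : 0 < C₀) (hD : 0 < D₀)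
    (F : EuclideanSpace ℂ (Fin N) → ℝ)
    (hF : ∀ w, F w =
      A₀ * ‖∑ j, h₁ j * w j‖ ^ 2 +
        B₀ * ‖∑ j, h₁ j * w j‖ ^ 2 * ‖∑ j, h₂ j * w j‖ ^ 2 /
          (C₀ * ‖∑ j, h₁ j * w j‖ ^ 2 + D₀ * ‖∑ j, h₂ j * w j‖ ^ 2 + 1))
    (h₁s h₂s : EuclideanSpace ℂ (Fin N))
    (hh₁s : h₁s = fun j => starRingEnd ℂ (h₁ j))
    (hh₂s : h₂s = fun j => starRingEnd ℂ (h₂ j))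
    (p : EuclideanSpace ℂ (Fin N))
    (hp : p = (Submodule.orthogonalProjection (ℂ ∙ h₁s) h₂s : EuclideanSpace ℂ (Fin N)))
    (hpne : p ≠ 0) (hqne : h₂s - p ≠ 0) :
    ∃ x : ℝ, x ∈ Set.Icc (0:ℝ) 1 ∧
      ∀ wopt : EuclideanSpace ℂ (Fin N),
        wopt = (x : ℂ) • (‖p‖⁻¹ • p)
          + ((Real.sqrt (1 - x ^ 2) : ℝ) : ℂ) • (‖h₂s - p‖⁻¹ • (h₂s - p)) →
        ‖wopt‖ = 1 ∧ IsGreatest (F '' {w | ‖w‖ = 1}) (F wopt) := by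
  classical
  set q : EuclideanSpace ℂ (Fin N) := h₂s - p with hqdef
  have hnp : 0 < ‖p‖ := norm_pos_iff.mpr hpne
  have hnq : 0 < ‖q‖ := norm_pos_iff.mpr hqne
  set u : EuclideanSpace ℂ (Fin N) := ‖p‖⁻¹ • p with hu
  set v : EuclideanSpace ℂ (Fin N) := ‖q‖⁻¹ • q with hv
  -- real smul = complex coe smul
  have rsmul : ∀ (r : ℝ) (x : EuclideanSpace ℂ (Fin N)), (r : ℂ) • x = r • x := by
    intro r x; rw [← Complex.coe_algebraMap, algebraMap_smul]
  -- membership facts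
  have hpK : p ∈ (ℂ ∙ h₁s) := by rw [hp]; exact SetLike.coe_mem _
  have hqK : q ∈ (ℂ ∙ h₁s)ᗮ := by
    rw [hqdef, hp]; exact Submodule.sub_starProjection_mem_orthogonal (K := ℂ ∙ h₁s) h₂s
  have hpq : ⟪p, q⟫_ℂ = 0 := (Submodule.mem_orthogonal _ _).1 hqK p hpK
  -- u, v orthonormal
  have hun : ‖u‖ = 1 := by
    rw [hu, norm_smul, norm_inv, norm_norm, inv_mul_cancel₀ hnp.ne']
  have hvn : ‖v‖ = 1 := by
    rw [hv, norm_smul, norm_inv, norm_norm, inv_mul_cancel₀ hnq.ne']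
  have huv : ⟪u, v⟫_ℂ = 0 := by
    rw [hu, hv, ← rsmul, ← rsmul, inner_smul_left, inner_smul_right, hpq]
    ring
  have huv' : ⟪v, u⟫_ℂ = 0 := by rw [inner_eq_zero_symm]; exact huv
  have huu : ⟪u, u⟫_ℂ = 1 := by
    rw [inner_self_eq_norm_sq_to_K, hun]; norm_num
  have hvv : ⟪v, v⟫_ℂ = 1 := by
    rw [inner_self_eq_norm_sq_to_K, hvn]; norm_num
  -- Bessel
  have hbessel : ∀ w : EuclideanSpace ℂ (Fin N), ‖⟪u, w⟫_ℂ‖ ^ 2 + ‖⟪v, w⟫_ℂ‖ ^ 2 ≤ ‖w‖ ^ 2 := by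
    intro w
    have horth : Orthonormal ℂ ![u, v] := by
      refine orthonormal_iff_ite.mpr ?_
      intro i j
      fin_cases i <;> fin_cases j
      · simpa using huu
      · simpa using huv
      · simpa using huv'
      · simpa using hvv
    simpa [Fin.sum_univ_two] using horth.sum_inner_products_le (𝕜 := ℂ) w (s := Finset.univ)
  -- p = ‖p‖ • u, q = ‖q‖ • v
  have hpu : p = (‖p‖ : ℂ) • u := by
    rw [hu, rsmul, smul_smul, mul_inv_cancel₀ hnp.ne', one_smul]
  have hqv : q = (‖q‖ : ℂ) • v := by
    rw [hv, rsmul, smul_smul, mul_inv_cancel₀ hnq.ne', one_smul]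
  -- h₁s = d-multiple of u in inner products
  obtain ⟨c, hc⟩ := Submodule.mem_span_singleton.1 hpK
  have hcne : c ≠ 0 := by rintro rfl; rw [zero_smul] at hc; exact hpne hc.symm
  set d : ℂ := c⁻¹ * (‖p‖ : ℂ) with hd
  set m : ℝ := ‖d‖ with hm
  have ha : ∀ w : EuclideanSpace ℂ (Fin N), ⟪h₁s, w⟫_ℂ = starRingEnd ℂ d * ⟪u, w⟫_ℂ := by
    intro w
    have h1 : ⟪p, w⟫_ℂ = starRingEnd ℂ c * ⟪h₁s, w⟫_ℂ := by
      rw [← hc, inner_smul_left]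
    have h2 : ⟪p, w⟫_ℂ = (‖p‖ : ℂ) * ⟪u, w⟫_ℂ := by
      conv_lhs => rw [hpu]
      rw [inner_smul_left, Complex.conj_ofReal]
    have hcc : starRingEnd ℂ c ≠ 0 := by simpa using hcne
    have hdc : starRingEnd ℂ d = (starRingEnd ℂ c)⁻¹ * (‖p‖ : ℂ) := by
      rw [hd, map_mul, map_inv₀, Complex.conj_ofReal]
    rw [hdc, mul_assoc, ← h2, h1, inv_mul_cancel_left₀ hcc]
  have hna : ∀ w : EuclideanSpace ℂ (Fin N), ‖⟪h₁s, w⟫_ℂ‖ = m * ‖⟪u, w⟫_ℂ‖ := by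
    intro w
    rw [ha w, norm_mul, RCLike.norm_conj]
  have hb : ∀ w : EuclideanSpace ℂ (Fin N),
      ⟪h₂s, w⟫_ℂ = (‖p‖ : ℂ) * ⟪u, w⟫_ℂ + (‖q‖ : ℂ) * ⟪v, w⟫_ℂ := by
    intro w
    have h2s : h₂s = p + q := by rw [hqdef]; abel
    rw [h2s, inner_add_left]
    congr 1
    · conv_lhs => rw [hpu]
      rw [inner_smul_left, Complex.conj_ofReal]
    · conv_lhs => rw [hqv]
      rw [inner_smul_left, Complex.conj_ofReal]
  -- sums are inner products
  have hsum1 : ∀ w : EuclideanSpace ℂ (Fin N), (∑ j, h₁ j * w j) = ⟪h₁s, w⟫_ℂ := by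
    intro w
    simp only [PiLp.inner_apply, hh₁s]
    simp [PiLp.inner_apply, RCLike.inner_apply, mul_comm]
  have hsum2 : ∀ w : EuclideanSpace ℂ (Fin N), (∑ j, h₂ j * w j) = ⟪h₂s, w⟫_ℂ := by
    intro w
    simp only [PiLp.inner_apply, hh₂s]
    simp [PiLp.inner_apply, RCLike.inner_apply, mul_comm]
  have hFab : ∀ w : EuclideanSpace ℂ (Fin N), F w =
      A₀ * (m * ‖⟪u, w⟫_ℂ‖) ^ 2 +
        B₀ * (m * ‖⟪u, w⟫_ℂ‖) ^ 2 * ‖⟪h₂s, w⟫_ℂ‖ ^ 2 /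
          (C₀ * (m * ‖⟪u, w⟫_ℂ‖) ^ 2 + D₀ * ‖⟪h₂s, w⟫_ℂ‖ ^ 2 + 1) := by
    intro w
    rw [hF, hsum1, hsum2, hna]
  set G : ℝ → ℝ := fun x =>
    A₀ * (m * x) ^ 2 + B₀ * (m * x) ^ 2 * (‖p‖ * x + ‖q‖ * Real.sqrt (1 - x ^ 2)) ^ 2 /
      (C₀ * (m * x) ^ 2 + D₀ * (‖p‖ * x + ‖q‖ * Real.sqrt (1 - x ^ 2)) ^ 2 + 1) with hG
  have hGc : Continuous G := by
    rw [hG]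
    apply Continuous.add (by fun_prop)
    apply Continuous.div (by fun_prop) (by fun_prop)
    intro x
    positivity
  obtain ⟨xb, hxI, hxmax⟩ := isCompact_Icc.exists_isMaxOn
    (Set.nonempty_Icc.mpr zero_le_one) hGc.continuousOn
  -- the key inequality
  have key : ∀ w : EuclideanSpace ℂ (Fin N), ‖w‖ = 1 →
      ‖⟪u, w⟫_ℂ‖ ∈ Set.Icc (0:ℝ) 1 ∧ F w ≤ G ‖⟪u, w⟫_ℂ‖ := by
    intro w hw
    have hbes : ‖⟪u, w⟫_ℂ‖ ^ 2 + ‖⟪v, w⟫_ℂ‖ ^ 2 ≤ 1 := by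
      have := hbessel w
      rw [hw] at this
      simpa using this
    have hx0 : 0 ≤ ‖⟪u, w⟫_ℂ‖ := norm_nonneg _
    have hb0 : 0 ≤ ‖⟪v, w⟫_ℂ‖ := norm_nonneg _
    have hx1 : ‖⟪u, w⟫_ℂ‖ ≤ 1 := by nlinarith
    have hsub : 0 ≤ 1 - ‖⟪u, w⟫_ℂ‖ ^ 2 := by nlinarith
    have hbeta : ‖⟪v, w⟫_ℂ‖ ≤ Real.sqrt (1 - ‖⟪u, w⟫_ℂ‖ ^ 2) := by
      rw [show ‖⟪v, w⟫_ℂ‖ = Real.sqrt (‖⟪v, w⟫_ℂ‖ ^ 2) from (Real.sqrt_sq hb0).symm]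
      exact Real.sqrt_le_sqrt (by nlinarith)
    refine ⟨⟨hx0, hx1⟩, ?_⟩
    have hbnorm : ‖⟪h₂s, w⟫_ℂ‖ ≤
        ‖p‖ * ‖⟪u, w⟫_ℂ‖ + ‖q‖ * Real.sqrt (1 - ‖⟪u, w⟫_ℂ‖ ^ 2) := by
      rw [hb w]
      refine (norm_add_le _ _).trans ?_
      rw [norm_mul, norm_mul, Complex.norm_real, Complex.norm_real,
        Real.norm_eq_abs, Real.norm_eq_abs, abs_of_nonneg hnp.le, abs_of_nonneg hnq.le]
      gcongr
    have htle : ‖⟪h₂s, w⟫_ℂ‖ ^ 2 ≤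
        (‖p‖ * ‖⟪u, w⟫_ℂ‖ + ‖q‖ * Real.sqrt (1 - ‖⟪u, w⟫_ℂ‖ ^ 2)) ^ 2 :=
      pow_le_pow_left₀ (norm_nonneg _) hbnorm 2
    rw [hFab w]
    simp only [hG]
    exact phi_mono' A₀ hB.le hC.le hD.le (by positivity) (by positivity) htle
  -- the candidate family
  set W : ℝ → EuclideanSpace ℂ (Fin N) := fun x =>
    (x : ℂ) • u + ((Real.sqrt (1 - x ^ 2) : ℝ) : ℂ) • v with hW
  have hWu : ∀ x : ℝ, ⟪u, W x⟫_ℂ = (x : ℂ) := by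
    intro x
    simp only [hW, inner_add_right, inner_smul_right, huu, huv, mul_one, mul_zero, add_zero]
  have hWv : ∀ x : ℝ, ⟪v, W x⟫_ℂ = ((Real.sqrt (1 - x ^ 2) : ℝ) : ℂ) := by
    intro x
    simp only [hW, inner_add_right, inner_smul_right, hvv, huv', mul_one, mul_zero, zero_add]
  have hWnorm : ∀ x ∈ Set.Icc (0:ℝ) 1, ‖W x‖ = 1 := by
    intro x hx
    have hsub : 0 ≤ 1 - x ^ 2 := by nlinarith [hx.1, hx.2]
    have hy : Real.sqrt (1 - x ^ 2) ^ 2 = 1 - x ^ 2 := Real.sq_sqrt hsub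
    have hnsq : ‖W x‖ ^ 2 = 1 := by
      simp only [hW]
      rw [norm_add_sq (𝕜 := ℂ), inner_smul_left, inner_smul_right, huv, mul_zero, mul_zero,
        map_zero, mul_zero, add_zero, norm_smul, hun, norm_smul, hvn]
      simp only [Complex.norm_real, Real.norm_eq_abs, mul_one, sq_abs]
      linarith [hy]
    calc ‖W x‖ = Real.sqrt (‖W x‖ ^ 2) := (Real.sqrt_sq (norm_nonneg _)).symm
      _ = 1 := by rw [hnsq]; exact Real.sqrt_one
  have hFW : ∀ x ∈ Set.Icc (0:ℝ) 1, F (W x) = G x := by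
    intro x hx
    have hy0 : 0 ≤ Real.sqrt (1 - x ^ 2) := Real.sqrt_nonneg _
    have h1 : ‖⟪u, W x⟫_ℂ‖ = x := by
      rw [hWu x, Complex.norm_real, Real.norm_eq_abs, abs_of_nonneg hx.1]
    have h2 : ‖⟪h₂s, W x⟫_ℂ‖ = ‖p‖ * x + ‖q‖ * Real.sqrt (1 - x ^ 2) := by
      rw [hb (W x), hWu x, hWv x,
        show (‖p‖ : ℂ) * (x : ℂ) + (‖q‖ : ℂ) * ((Real.sqrt (1 - x ^ 2) : ℝ) : ℂ)
          = ((‖p‖ * x + ‖q‖ * Real.sqrt (1 - x ^ 2) : ℝ) : ℂ) by push_cast; ring,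
        Complex.norm_real, Real.norm_eq_abs,
        abs_of_nonneg (add_nonneg (mul_nonneg hnp.le hx.1) (mul_nonneg hnq.le hy0))]
    rw [hFab (W x), h1, h2]
  -- conclusion
  refine ⟨xb, hxI, ?_⟩
  intro wopt hwopt
  have hwW : wopt = W xb := hwopt
  have hn1 : ‖wopt‖ = 1 := by rw [hwW]; exact hWnorm xb hxI
  refine ⟨hn1, ⟨wopt, hn1, rfl⟩, ?_⟩
  rintro y ⟨w, hw, rfl⟩
  have hk := key w hw
  calc F w ≤ G ‖⟪u, w⟫_ℂ‖ := hk.2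
    _ ≤ G xb := hxmax hk.1
    _ = F (W xb) := (hFW xb hxI).symm
    _ = F wopt := by rw [hwW]
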